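/- There is a constant c depending only on a₁ and a₂ such that for every nonnegative integer k and every X ≥ 2: ∫₀¹ |Re P_ℒ(θ)|^k dθ ≤ (ckΨ)^{k/2}, where Ψ = Σ_{p≤X²} 1/p (sum over primes). -/

import Mathlib

open Complex MeasureTheory ProbabilityTheory Filter Finset DirichletCharacter

noncomputable section

/-- The finset of primes `p ≤ X²`. -/
def primesUptoSq (X : ℝ) : Finset ℕ := (Finset.range (⌊X ^ 2⌋₊ + 1)).filter Nat.Prime

/-- The finset of primes `p ≤ x`. -/
def primesUpto (x : ℝ) : Finset ℕ := (Finset.range (⌊x⌋₊ + 1)).filter Nat.Prime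

/-- The Dirichlet polynomial `P_χ(γ) = ∑_{p ≤ X²} χ(p) p^{-1/2 - iγ}`. -/
def Pgamma {N : ℕ} (χ : DirichletCharacter ℂ N) (X γ : ℝ) : ℂ :=
  ∑ p ∈ primesUptoSq X, χ (p : ZMod N) * (p : ℂ) ^ (-(1 / 2 : ℂ) - I * γ)

/-- `P_ℒ(γ) = a₁ P_{χ₁}(γ) + a₂ P_{χ₂}(γ)`. -/
def PLgamma {N₁ N₂ : ℕ} (a₁ a₂ : ℝ) (χ₁ : DirichletCharacter ℂ N₁)
    (χ₂ : DirichletCharacter ℂ N₂) (X γ : ℝ) : ℂ :=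
  (a₁ : ℂ) * Pgamma χ₁ X γ + (a₂ : ℂ) * Pgamma χ₂ X γ

/-- The value of the random polynomial `P_χ(θ) = ∑_{p ≤ X²} χ(p) e^{2πiθ_p}/√p` at a
point `v = (θ_p)_p`. -/
def Ptheta {N : ℕ} (χ : DirichletCharacter ℂ N) (X : ℝ) (v : ℕ → ℝ) : ℂ :=
  ∑ p ∈ primesUptoSq X, χ (p : ZMod N) * Complex.exp (2 * Real.pi * I * (v p)) / Real.sqrt p

/-- `P_ℒ(θ) = a₁ P_{χ₁}(θ) + a₂ P_{χ₂}(θ)`. -/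
def PLtheta {N₁ N₂ : ℕ} (a₁ a₂ : ℝ) (χ₁ : DirichletCharacter ℂ N₁)
    (χ₂ : DirichletCharacter ℂ N₂) (X : ℝ) (v : ℕ → ℝ) : ℂ :=
  (a₁ : ℂ) * Ptheta χ₁ X v + (a₂ : ℂ) * Ptheta χ₂ X v

/-- The ordinates `γ ∈ (0, T]` of the zeros of `ζ` on the critical line (under RH, these
are exactly the ordinates of the nontrivial zeros of `ζ` in the upper half plane up to `T`). -/
def zetaZerosIn (T : ℝ) : Set ℝ :=
  {γ : ℝ | 0 < γ ∧ γ ≤ T ∧ riemannZeta (1 / 2 + I * γ) = 0}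

/-- `N(T)`, the number of nontrivial zeros of `ζ` with ordinate in `(0, T]`. -/
def NT (T : ℝ) : ℝ := ((zetaZerosIn T).ncard : ℝ)

/-- The Riemann Hypothesis: all nontrivial zeros of `ζ` lie on the critical line. -/
def RHzeta : Prop := ∀ s : ℂ, 0 < s.re → s.re < 1 → riemannZeta s = 0 → s.re = 1 / 2

/-- GRH for `L(s, χ)`: all nontrivial zeros of `L(s,χ)` lie on the critical line. -/
def GRHchar {N : ℕ} [NeZero N] (χ : DirichletCharacter ℂ N) : Prop :=
  ∀ s : ℂ, 0 < s.re → s.re < 1 → LFunction χ s = 0 → s.re = 1 / 2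

/-- Hypothesis 𝒟: no nontrivial zero of `L(s,χ)` coincides with a nontrivial zero of `ζ`. -/
def HypD {N : ℕ} [NeZero N] (χ : DirichletCharacter ℂ N) : Prop :=
  ∀ s : ℂ, 0 < s.re → s.re < 1 → riemannZeta s = 0 → LFunction χ s ≠ 0

/-- Hypothesis `H_{α,χ}`: there is `c > 0` such that for every `C ∈ (0,1)`, the limsup as
`T → ∞` of the proportion of ordinates `γ ∈ (0,T]` of zeros of `ζ` lying within `C/log T`
of an ordinate of a (critical-line) zero of `L(s,χ)` is at most `c C^α`. -/
def HypH {N : ℕ} [NeZero N] (χ : DirichletCharacter ℂ N) (α : ℝ) : Prop :=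
  ∃ c > (0 : ℝ), ∀ C : ℝ, 0 < C → C < 1 →
    Filter.limsup (fun T : ℝ =>
      (((zetaZerosIn T ∩ {γ : ℝ | ∃ x : ℝ,
          LFunction χ (1 / 2 + I * x) = 0 ∧ |x - γ| ≤ C / Real.log T}).ncard : ℝ) / NT T))
      Filter.atTop ≤ c * C ^ α

/-- `Ψ = ∑_{p ≤ X²} 1/p`. -/
def Psi (X : ℝ) : ℝ := ∑ p ∈ primesUptoSq X, (1 : ℝ) / p

/-- `Ψ(T) = ∑_{p ≤ T} 1/p`. -/
def PsiT (T : ℝ) : ℝ := ∑ p ∈ primesUpto T, (1 : ℝ) / p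

/-- The weight `w_X(n)`. -/
def wX (X : ℝ) (n : ℕ) : ℝ :=
  if (n : ℝ) ≤ X then 1 else Real.log (X ^ 2 / n) / Real.log X

/-- `Λ_X(n) = Λ(n) w_X(n)`. -/
def LambdaX (X : ℝ) (n : ℕ) : ℝ := ArithmeticFunction.vonMangoldt n * wX X n

/-- `σ₁ = 1/2 + 4/log X`. -/
def sigma1 (X : ℝ) : ℝ := 1 / 2 + 4 / Real.log X

lemma my_hoeffding {Ω : Type} [MeasurableSpace Ω] (μ : Measure Ω) [IsProbabilityMeasure μ]
    (Z : Ω → ℝ) (c u : ℝ) (hc : 0 < c) (hmeas : Measurable Z)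
    (hbdd : ∀ ω, |Z ω| ≤ c) (hmean : ∫ ω, Z ω ∂μ = 0) :
    mgf Z μ u ≤ Real.exp (u ^ 2 * c ^ 2 / 2) := by
  set A := Real.exp (u * c) with hA
  set B := Real.exp (-(u * c)) with hB
  have hZint : Integrable Z μ :=
    (integrable_const c).mono' hmeas.aestronglyMeasurable
      (Filter.Eventually.of_forall fun ω => by
        simpa [Real.norm_eq_abs, abs_of_pos hc] using hbdd ω)
  have hexpint : Integrable (fun ω => Real.exp (u * Z ω)) μ := by
    refine (integrable_const (Real.exp (|u| * c))).mono'
      ((hmeas.const_mul u).exp).aestronglyMeasurable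
      (Filter.Eventually.of_forall fun ω => ?_)
    rw [Real.norm_eq_abs, abs_of_pos (Real.exp_pos _), Real.exp_le_exp]
    calc u * Z ω ≤ |u * Z ω| := le_abs_self _
      _ = |u| * |Z ω| := abs_mul _ _
      _ ≤ |u| * c := by exact mul_le_mul_of_nonneg_left (hbdd ω) (abs_nonneg u)
  have hpt : ∀ ω, Real.exp (u * Z ω) ≤ (A + B) / 2 + Z ω * ((A - B) / (2 * c)) := by
    intro ω
    set x := Z ω with hx
    have hx1 : -c ≤ x := (abs_le.1 (hbdd ω)).1
    have hx2 : x ≤ c := (abs_le.1 (hbdd ω)).2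
    set l := (c + x) / (2 * c) with hl
    have hl0 : 0 ≤ l := div_nonneg (by linarith) (by linarith)
    have hl1 : 0 ≤ 1 - l := by
      rw [hl]; rw [sub_nonneg, div_le_one (by linarith)]; linarith
    have key := convexOn_exp.2 (Set.mem_univ (u * c)) (Set.mem_univ (-(u * c)))
      hl0 hl1 (by ring)
    have harg : l • (u * c) + (1 - l) • (-(u * c)) = u * x := by
      simp only [smul_eq_mul, hl]
      field_simp
      ring
    rw [harg] at key
    calc Real.exp (u * x) ≤ l * A + (1 - l) * B := key
      _ = (A + B) / 2 + x * ((A - B) / (2 * c)) := by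
        rw [hl]; field_simp; ring
  have hRint : Integrable (fun ω => (A + B) / 2 + Z ω * ((A - B) / (2 * c))) μ :=
    (integrable_const _).add (hZint.mul_const _)
  calc mgf Z μ u = ∫ ω, Real.exp (u * Z ω) ∂μ := rfl
    _ ≤ ∫ ω, ((A + B) / 2 + Z ω * ((A - B) / (2 * c))) ∂μ :=
        integral_mono hexpint hRint hpt
    _ = (A + B) / 2 + (∫ ω, Z ω ∂μ) * ((A - B) / (2 * c)) := by
        rw [integral_add (integrable_const _) (hZint.mul_const _), integral_const,
          integral_mul_const, probReal_univ]
        norm_num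
    _ = (A + B) / 2 := by rw [hmean]; ring
    _ = Real.cosh (u * c) := by rw [Real.cosh_eq]
    _ ≤ Real.exp ((u * c) ^ 2 / 2) := Real.cosh_le_exp_half_sq _
    _ = Real.exp (u ^ 2 * c ^ 2 / 2) := by rw [mul_pow]

/-- single exponential moment comparison : x^k ≤ k! e^x for x ≥ 0 -/
lemma my_pow_le_exp {x : ℝ} (hx : 0 ≤ x) (k : ℕ) : x ^ k ≤ (Nat.factorial k : ℝ) * Real.exp x := by
  have h1 : x ^ k / (Nat.factorial k : ℝ) ≤ ∑ i ∈ range (k + 1), x ^ i / (Nat.factorial i : ℝ) :=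
    Finset.single_le_sum (f := fun i => x ^ i / (Nat.factorial i : ℝ))
      (fun i _ => by positivity) (self_mem_range_succ k)
  have h2 := Real.sum_le_exp_of_nonneg hx (k + 1)
  have hk : (0 : ℝ) < (Nat.factorial k : ℝ) := by exact_mod_cast Nat.factorial_pos k
  rw [div_le_iff₀ hk] at *
  calc x ^ k ≤ (∑ i ∈ range (k + 1), x ^ i / (Nat.factorial i : ℝ)) * (Nat.factorial k : ℝ) := by
        rw [← div_le_iff₀ hk] at h1 ⊢; exact h1
    _ ≤ Real.exp x * (Nat.factorial k : ℝ) := by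
        exact mul_le_mul_of_nonneg_right h2 hk.le
    _ = (Nat.factorial k : ℝ) * Real.exp x := mul_comm _ _

set_option maxHeartbeats 1000000 in
/-- **Lemma 2.4**: the `k`-th moment of `|Re P_ℒ(θ)|` with respect to the random variables
`θ = (θ_p)_p` (iid, uniform on `[0,1]`) is `O((ckΨ)^{k/2})` with `c` depending only on
`a₁, a₂`. -/
theorem random_moments_of_Re_P_linear_combination (a₁ a₂ : ℝ) :
    ∃ c : ℝ, ∀ (M₁ M₂ : ℕ) (χ₁ : DirichletCharacter ℂ M₁) (χ₂ : DirichletCharacter ℂ M₂),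
      χ₁.IsPrimitive → χ₂.IsPrimitive →
      (fun m : ℕ => χ₁ (m : ZMod M₁)) ≠ (fun m : ℕ => χ₂ (m : ZMod M₂)) →
      ∀ {Ω : Type} [MeasurableSpace Ω] (μ : Measure Ω), IsProbabilityMeasure μ →
      ∀ θ : ℕ → Ω → ℝ, (∀ p : ℕ, Measurable (θ p)) →
      (∀ p : ℕ, p.Prime → μ.map (θ p) = volume.restrict (Set.Icc (0 : ℝ) 1)) →
      iIndepFun (fun p : Nat.Primes => θ (p : ℕ)) μ →
      ∀ k : ℕ, ∀ X : ℝ, 2 ≤ X →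
      (∫ ω, |(PLtheta a₁ a₂ χ₁ χ₂ X fun p => θ p ω).re| ^ k ∂μ)
        ≤ (c * k * Psi X) ^ ((k : ℝ) / 2) := by
  classical
  set A : ℝ := |a₁| + |a₂| with hA
  refine ⟨4 * Real.exp 1 * A ^ 2 + 1, ?_⟩
  intro M₁ M₂ χ₁ χ₂ _ _ _ Ω _ μ hμ θ hθmeas hθmap hθind k X hX
  set c : ℝ := 4 * Real.exp 1 * A ^ 2 + 1 with hc
  -- basic positivity facts
  have hA0 : 0 ≤ A := by positivity
  have hPsi0 : 0 ≤ Psi X := Finset.sum_nonneg fun p _ => by positivity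
  have hcpos : (0 : ℝ) < c := by positivity
  -- the case k = 0
  rcases Nat.eq_zero_or_pos k with hk0 | hkpos
  · subst hk0
    simp [Real.rpow_zero]
  -- prime facts
  have hmem : ∀ p ∈ primesUptoSq X, p.Prime := fun p hp => (Finset.mem_filter.1 hp).2
  have hsqrt_pos : ∀ p : ℕ, p.Prime → (0 : ℝ) < Real.sqrt p := fun p hp =>
    Real.sqrt_pos.2 (by exact_mod_cast hp.pos)
  -- coefficients
  set b : ℕ → ℂ := fun p => (a₁ : ℂ) * χ₁ (p : ZMod M₁) + (a₂ : ℂ) * χ₂ (p : ZMod M₂) with hb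
  set g : ℕ → ℝ → ℝ :=
    fun p x => (b p * Complex.exp (2 * Real.pi * I * (x : ℂ)) / (Real.sqrt p : ℂ)).re with hg
  -- the sum decomposition
  have hre : ∀ v : ℕ → ℝ, (PLtheta a₁ a₂ χ₁ χ₂ X v).re = ∑ p ∈ primesUptoSq X, g p (v p) := by
    intro v
    rw [PLtheta, Ptheta, Ptheta, Finset.mul_sum, Finset.mul_sum, ← Finset.sum_add_distrib,
      Complex.re_sum]
    refine Finset.sum_congr rfl fun p hp => ?_
    simp only [hg, hb]
    congr 1
    ring
  -- measurability of g p
  have hgmeas : ∀ p : ℕ, Measurable (g p) := by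
    intro p
    exact (Complex.continuous_re.comp (((continuous_const.mul
      (Complex.continuous_exp.comp (continuous_const.mul Complex.continuous_ofReal))).div_const
      _))).measurable
  -- bound on g p
  have hgbdd : ∀ p : ℕ, p.Prime → ∀ x : ℝ, |g p x| ≤ A / Real.sqrt p := by
    intro p hp x
    have habs : ‖b p‖ ≤ A := by
      calc ‖b p‖ = ‖b p‖ := rfl
        _ ≤ ‖(a₁ : ℂ) * χ₁ (p : ZMod M₁)‖ + ‖(a₂ : ℂ) * χ₂ (p : ZMod M₂)‖ := norm_add_le _ _
        _ = |a₁| * ‖χ₁ (p : ZMod M₁)‖ + |a₂| * ‖χ₂ (p : ZMod M₂)‖ := by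
            rw [norm_mul, norm_mul, Complex.norm_real, Complex.norm_real,
              Real.norm_eq_abs, Real.norm_eq_abs]
        _ ≤ |a₁| * 1 + |a₂| * 1 := by
            gcongr
            · exact χ₁.norm_le_one _
            · exact χ₂.norm_le_one _
        _ = A := by rw [hA]; ring
    have hexp1 : ‖Complex.exp (2 * Real.pi * I * (x : ℂ))‖ = 1 := by
      rw [Complex.norm_exp]
      norm_num [Complex.mul_re]
    calc |g p x| ≤ ‖b p * Complex.exp (2 * Real.pi * I * (x : ℂ)) / (Real.sqrt p : ℂ)‖ :=
          Complex.abs_re_le_norm _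
      _ = ‖b p‖ / Real.sqrt p := by
          rw [norm_div, norm_mul, hexp1, mul_one, Complex.norm_real, Real.norm_eq_abs,
            _root_.abs_of_nonneg (Real.sqrt_nonneg _)]
      _ ≤ A / Real.sqrt p := by gcongr
  -- mean zero
  have hgmean : ∀ p : ℕ, p.Prime → ∫ ω, g p (θ p ω) ∂μ = 0 := by
    intro p hp
    have h2 : ∫ ω, g p (θ p ω) ∂μ = ∫ x, g p x ∂(μ.map (θ p)) :=
      (integral_map (hθmeas p).aemeasurable (hgmeas p).aestronglyMeasurable).symm
    rw [h2, hθmap p hp]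
    have hgeq : ∀ x : ℝ, g p x = (b p).re / Real.sqrt p * Real.cos (2 * Real.pi * x)
        - (b p).im / Real.sqrt p * Real.sin (2 * Real.pi * x) := by
      intro x
      simp only [hg]
      rw [show (2 * (Real.pi : ℂ) * I * (x : ℂ)) = ((2 * Real.pi * x : ℝ) : ℂ) * I by
        push_cast; ring, Complex.exp_mul_I, ← Complex.ofReal_cos, ← Complex.ofReal_sin,
        Complex.div_ofReal_re]
      simp only [Complex.add_re, Complex.mul_re, Complex.mul_im, Complex.cos_ofReal_re,
        Complex.sin_ofReal_re, Complex.cos_ofReal_im, Complex.sin_ofReal_im, Complex.I_re,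
        Complex.I_im, Complex.ofReal_re, Complex.ofReal_im, Complex.add_im,
        mul_zero, zero_mul, mul_one, sub_zero, add_zero, zero_sub, zero_add]
      ring
    simp_rw [hgeq]
    have hccos : Continuous fun x : ℝ => Real.cos (2 * Real.pi * x) :=
      Real.continuous_cos.comp (continuous_const.mul continuous_id)
    have hcsin : Continuous fun x : ℝ => Real.sin (2 * Real.pi * x) :=
      Real.continuous_sin.comp (continuous_const.mul continuous_id)
    have h2pi : (2 * Real.pi) ≠ 0 := by positivity
    have hcos : (∫ x in (0:ℝ)..1, Real.cos (2 * Real.pi * x)) = 0 := by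
      rw [intervalIntegral.integral_comp_mul_left Real.cos h2pi]
      norm_num [integral_cos, Real.sin_two_pi]
    have hsin : (∫ x in (0:ℝ)..1, Real.sin (2 * Real.pi * x)) = 0 := by
      rw [intervalIntegral.integral_comp_mul_left Real.sin h2pi]
      norm_num [integral_sin, Real.cos_two_pi]
    rw [MeasureTheory.integral_Icc_eq_integral_Ioc, ← intervalIntegral.integral_of_le zero_le_one,
      intervalIntegral.integral_sub ((hccos.intervalIntegrable 0 1).const_mul _)
        ((hcsin.intervalIntegrable 0 1).const_mul _),
      intervalIntegral.integral_const_mul, intervalIntegral.integral_const_mul, hcos, hsin]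
    ring
  -- degenerate case A = 0
  rcases eq_or_lt_of_le hA0 with hA0' | hApos
  · have ha1 : a₁ = 0 := by
      have h1 := abs_nonneg a₁; have h2 := abs_nonneg a₂
      rw [← abs_eq_zero]; linarith [hA0'.symm ▸ hA.symm]
    have ha2 : a₂ = 0 := by
      have h1 := abs_nonneg a₁; have h2 := abs_nonneg a₂
      rw [← abs_eq_zero]; linarith [hA0'.symm ▸ hA.symm]
    have hz : ∀ ω : Ω, |(PLtheta a₁ a₂ χ₁ χ₂ X fun p => θ p ω).re| ^ k = 0 := by
      intro ω
      simp [PLtheta, ha1, ha2, zero_pow hkpos.ne']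
    simp only [hz, integral_zero]
    positivity
  -- main case A > 0
  set T : Finset Nat.Primes := (primesUptoSq X).subtype Nat.Prime with hT
  set Y : Nat.Primes → Ω → ℝ := fun q ω => g (q : ℕ) (θ (q : ℕ) ω) with hYdef
  set S : Ω → ℝ := fun ω => ∑ p ∈ primesUptoSq X, g p (θ p ω) with hSdef
  have hYmeas : ∀ q : Nat.Primes, Measurable (Y q) := fun q => (hgmeas _).comp (hθmeas _)
  have hYind : iIndepFun Y μ :=
    hθind.comp (fun q => g (q : ℕ)) (fun q => hgmeas _)
  have hSfun : S = ∑ q ∈ T, Y q := by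
    funext ω
    rw [Finset.sum_apply]
    exact (Finset.sum_subtype_of_mem (fun n => g n (θ n ω)) hmem).symm
  have hSmeas : Measurable S :=
    Finset.measurable_sum _ fun p _ => (hgmeas p).comp (hθmeas p)
  set M : ℝ := ∑ p ∈ primesUptoSq X, A / Real.sqrt p with hM
  have hSbdd : ∀ ω, |S ω| ≤ M := by
    intro ω
    calc |S ω| ≤ ∑ p ∈ primesUptoSq X, |g p (θ p ω)| := Finset.abs_sum_le_sum_abs _ _
      _ ≤ M := Finset.sum_le_sum fun p hp => hgbdd p (hmem p hp) _
  have hint_exp : ∀ u : ℝ, Integrable (fun ω => Real.exp (u * S ω)) μ := by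
    intro u
    refine (integrable_const (Real.exp (|u| * M))).mono'
      ((hSmeas.const_mul u).exp).aestronglyMeasurable
      (Filter.Eventually.of_forall fun ω => ?_)
    rw [Real.norm_eq_abs, _root_.abs_of_pos (Real.exp_pos _), Real.exp_le_exp]
    calc u * S ω ≤ |u * S ω| := le_abs_self _
      _ = |u| * |S ω| := abs_mul _ _
      _ ≤ |u| * M := mul_le_mul_of_nonneg_left (hSbdd ω) (abs_nonneg u)
  have hM0 : 0 ≤ M := Finset.sum_nonneg fun p _ => by positivity
  have hint_pow : Integrable (fun ω => |S ω| ^ k) μ := by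
    refine (integrable_const (M ^ k)).mono'
      ((hSmeas.abs.pow_const k)).aestronglyMeasurable
      (Filter.Eventually.of_forall fun ω => ?_)
    rw [Real.norm_eq_abs, _root_.abs_pow, _root_.abs_abs]
    exact pow_le_pow_left₀ (abs_nonneg _) (hSbdd ω) k
  -- Psi X is positive since 2 is a prime ≤ X^2
  have h2mem : (2 : ℕ) ∈ primesUptoSq X := by
    rw [primesUptoSq, Finset.mem_filter, Finset.mem_range]
    refine ⟨?_, Nat.prime_two⟩
    have h4 : (4 : ℝ) ≤ X ^ 2 := by nlinarith
    have h4' : (4 : ℕ) ≤ ⌊X ^ 2⌋₊ := Nat.le_floor (by exact_mod_cast h4)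
    omega
  have hPsipos : 0 < Psi X := by
    have := Finset.single_le_sum (f := fun p : ℕ => (1 : ℝ) / p)
      (fun p _ => by positivity) h2mem
    have h05 : (0:ℝ) < 1 / ((2:ℕ):ℝ) := by norm_num
    exact lt_of_lt_of_le h05 this
  set v : ℝ := A ^ 2 * Psi X with hv
  have hvpos : 0 < v := mul_pos (pow_pos hApos 2) hPsipos
  -- mgf bound
  have hmgf : ∀ u : ℝ, mgf S μ u ≤ Real.exp (u ^ 2 * v / 2) := by
    intro u
    rw [hSfun, hYind.mgf_sum hYmeas T]
    have hterm : ∀ q ∈ T, mgf (Y q) μ u ≤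
        Real.exp (u ^ 2 * (A / Real.sqrt (q : ℕ)) ^ 2 / 2) := by
      intro q _
      exact my_hoeffding μ (Y q) (A / Real.sqrt (q : ℕ)) u
        (div_pos hApos (hsqrt_pos _ q.2)) (hYmeas q) (fun ω => hgbdd _ q.2 _)
        (hgmean _ q.2)
    calc ∏ q ∈ T, mgf (Y q) μ u
        ≤ ∏ q ∈ T, Real.exp (u ^ 2 * (A / Real.sqrt (q : ℕ)) ^ 2 / 2) :=
          Finset.prod_le_prod (fun q _ => mgf_nonneg) hterm
      _ = Real.exp (∑ q ∈ T, u ^ 2 * (A / Real.sqrt (q : ℕ)) ^ 2 / 2) :=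
          (Real.exp_sum _ _).symm
      _ = Real.exp (u ^ 2 * v / 2) := by
          congr 1
          have hterm2 : ∀ q ∈ T, u ^ 2 * (A / Real.sqrt ((q : ℕ)) : ℝ) ^ 2 / 2
              = (u ^ 2 * A ^ 2 / 2) * ((1 : ℝ) / ((q : ℕ) : ℝ)) := by
            intro q _
            rw [div_pow, Real.sq_sqrt (Nat.cast_nonneg _)]
            ring
          rw [Finset.sum_congr rfl hterm2, ← Finset.mul_sum]
          have hs : ∑ q ∈ T, (1 : ℝ) / (((q : ℕ)) : ℝ) = Psi X :=
            Finset.sum_subtype_of_mem (fun n : ℕ => (1 : ℝ) / (n : ℝ)) hmem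
          rw [hs, hv]
          ring
  -- choose t
  set K : ℝ := (k : ℝ) with hK
  have hK1 : (1 : ℝ) ≤ K := by rw [hK]; exact_mod_cast Nat.one_le_iff_ne_zero.2 hkpos.ne'
  have hKpos : (0 : ℝ) < K := by linarith
  set t : ℝ := Real.sqrt (K / v) with htdef
  have htpos : 0 < t := Real.sqrt_pos.2 (div_pos hKpos hvpos)
  have ht2 : t ^ 2 = K / v := Real.sq_sqrt (div_nonneg hKpos.le hvpos.le)
  have hexpval : t ^ 2 * v / 2 = K / 2 := by
    rw [ht2]; field_simp
  -- pointwise bound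
  have hpt : ∀ ω, |S ω| ^ k ≤ (Nat.factorial k : ℝ) / t ^ k *
      (Real.exp (t * S ω) + Real.exp (-t * S ω)) := by
    intro ω
    have h1 : (t * |S ω|) ^ k ≤ (Nat.factorial k : ℝ) * Real.exp (t * |S ω|) :=
      my_pow_le_exp (by positivity) k
    have h2 : Real.exp (t * |S ω|) ≤ Real.exp (t * S ω) + Real.exp (-t * S ω) := by
      rcases abs_choice (S ω) with h | h
      · rw [h]; exact le_add_of_nonneg_right (Real.exp_pos _).le
      · rw [h, show t * -(S ω) = -t * S ω by ring]
        exact le_add_of_nonneg_left (Real.exp_pos _).le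
    rw [div_mul_eq_mul_div, le_div_iff₀ (pow_pos htpos k)]
    calc |S ω| ^ k * t ^ k = (t * |S ω|) ^ k := by rw [mul_pow]; ring
      _ ≤ (Nat.factorial k : ℝ) * Real.exp (t * |S ω|) := h1
      _ ≤ (Nat.factorial k : ℝ) * (Real.exp (t * S ω) + Real.exp (-t * S ω)) :=
          mul_le_mul_of_nonneg_left h2 (Nat.cast_nonneg _)
  -- integrate
  have hmain : ∫ ω, |S ω| ^ k ∂μ ≤ (Nat.factorial k : ℝ) / t ^ k * (2 * Real.exp (K / 2)) := by
    calc ∫ ω, |S ω| ^ k ∂μ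
        ≤ ∫ ω, (Nat.factorial k : ℝ) / t ^ k *
            (Real.exp (t * S ω) + Real.exp (-t * S ω)) ∂μ :=
          integral_mono hint_pow
            (((hint_exp t).add (hint_exp (-t))).const_mul _) hpt
      _ = (Nat.factorial k : ℝ) / t ^ k *
            ((∫ ω, Real.exp (t * S ω) ∂μ) + ∫ ω, Real.exp (-t * S ω) ∂μ) := by
          rw [integral_const_mul, integral_add (hint_exp t) (hint_exp (-t))]
      _ ≤ (Nat.factorial k : ℝ) / t ^ k * (2 * Real.exp (K / 2)) := by
          have hb1 : (∫ ω, Real.exp (t * S ω) ∂μ) ≤ Real.exp (K / 2) := by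
            have := hmgf t
            rw [hexpval] at this
            exact this
          have hb2 : (∫ ω, Real.exp (-t * S ω) ∂μ) ≤ Real.exp (K / 2) := by
            have := hmgf (-t)
            rw [neg_sq, hexpval] at this
            exact this
          have hnn : (0:ℝ) ≤ (Nat.factorial k : ℝ) / t ^ k := by positivity
          nlinarith [hb1, hb2, hnn]
  -- identify the integrand
  have hLHS : (∫ ω, |(PLtheta a₁ a₂ χ₁ χ₂ X fun p => θ p ω).re| ^ k ∂μ)
      = ∫ ω, |S ω| ^ k ∂μ := by
    refine integral_congr_ae (Filter.Eventually.of_forall fun ω => ?_)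
    show |(PLtheta a₁ a₂ χ₁ χ₂ X fun p => θ p ω).re| ^ k = |S ω| ^ k
    rw [hre]
  -- rpow computations
  have hKv0 : (0 : ℝ) ≤ v / K := div_nonneg hvpos.le hKpos.le
  have hKv0' : (0 : ℝ) ≤ K / v := div_nonneg hKpos.le hvpos.le
  have htk : t ^ k = (K / v) ^ (K / 2) := by
    rw [← Real.rpow_natCast t k, htdef, Real.sqrt_eq_rpow, ← Real.rpow_mul hKv0']
    congr 1
    rw [hK]; ring
  have hinvtk : (t ^ k)⁻¹ = (v / K) ^ (K / 2) := by
    rw [htk, ← Real.inv_rpow hKv0', inv_div]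
  have hfac : (Nat.factorial k : ℝ) ≤ (K ^ 2) ^ (K / 2) := by
    have h1 : (Nat.factorial k : ℝ) ≤ K ^ k := by
      rw [hK]; exact_mod_cast Nat.factorial_le_pow k
    calc (Nat.factorial k : ℝ) ≤ K ^ k := h1
      _ = (K ^ (2 : ℝ)) ^ (K / 2) := by
          rw [← Real.rpow_natCast K k, ← Real.rpow_mul hKpos.le]
          congr 1
          rw [hK]; ring
      _ = (K ^ 2) ^ (K / 2) := by rw [Real.rpow_two]
  have h2le : (2 : ℝ) ≤ (4 : ℝ) ^ (K / 2) := by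
    have h42 : (4 : ℝ) ^ (K / 2) = 2 ^ K := by
      rw [show (4 : ℝ) = (2 : ℝ) ^ (2 : ℝ) by rw [Real.rpow_two]; norm_num,
        ← Real.rpow_mul (by norm_num : (0:ℝ) ≤ 2)]
      congr 1; ring
    rw [h42]
    calc (2 : ℝ) = 2 ^ (1 : ℝ) := (Real.rpow_one 2).symm
      _ ≤ 2 ^ K := (Real.rpow_le_rpow_left_iff one_lt_two).2 hK1
  have hexp1 : Real.exp (K / 2) = (Real.exp 1) ^ (K / 2) := (Real.exp_one_rpow _).symm
  have he0 : (0 : ℝ) ≤ Real.exp 1 := (Real.exp_pos 1).le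
  have hnum : (Nat.factorial k : ℝ) / t ^ k * (2 * Real.exp (K / 2))
      ≤ (c * K * Psi X) ^ (K / 2) := by
    calc (Nat.factorial k : ℝ) / t ^ k * (2 * Real.exp (K / 2))
        = (Nat.factorial k : ℝ) * (v / K) ^ (K / 2) * (2 * Real.exp (K / 2)) := by
          rw [div_eq_mul_inv, hinvtk]
      _ ≤ (K ^ 2) ^ (K / 2) * (v / K) ^ (K / 2) *
            ((4 : ℝ) ^ (K / 2) * (Real.exp 1) ^ (K / 2)) := by
          rw [hexp1]
          have hx1 : (Nat.factorial k : ℝ) * (v / K) ^ (K / 2)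
              ≤ (K ^ 2) ^ (K / 2) * (v / K) ^ (K / 2) :=
            mul_le_mul_of_nonneg_right hfac (Real.rpow_nonneg hKv0 _)
          have hx2 : (2 : ℝ) * (Real.exp 1) ^ (K / 2)
              ≤ (4 : ℝ) ^ (K / 2) * (Real.exp 1) ^ (K / 2) :=
            mul_le_mul_of_nonneg_right h2le (Real.rpow_nonneg he0 _)
          exact mul_le_mul hx1 hx2 (by positivity) (by positivity)
      _ = (K ^ 2 * (v / K) * (4 * Real.exp 1)) ^ (K / 2) := by
          rw [Real.mul_rpow (by positivity) (by positivity),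
            Real.mul_rpow (by positivity) hKv0, Real.mul_rpow (by norm_num) he0]
      _ ≤ (c * K * Psi X) ^ (K / 2) := by
          apply Real.rpow_le_rpow (by positivity) ?_ (by positivity)
          have hexpand : K ^ 2 * (v / K) * (4 * Real.exp 1)
              = (4 * Real.exp 1 * A ^ 2) * (K * Psi X) := by
            rw [hv]; field_simp
          rw [hexpand, hc]
          have hKP : 0 ≤ K * Psi X := mul_nonneg hKpos.le hPsi0
          nlinarith [hKP]
  calc (∫ ω, |(PLtheta a₁ a₂ χ₁ χ₂ X fun p => θ p ω).re| ^ k ∂μ)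
      = ∫ ω, |S ω| ^ k ∂μ := hLHS
    _ ≤ (Nat.factorial k : ℝ) / t ^ k * (2 * Real.exp (K / 2)) := hmain
    _ ≤ (c * K * Psi X) ^ (K / 2) := hnum


end
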